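/- For every function u ∈ H¹(a,b) with mean value ū := (b−a)⁻¹ ∫ₐᵇ u(x) dx, one has ‖u − ū‖_{L²(a,b)} ≤ ((b−a)/π) ‖u'‖_{L²(a,b)}. -/

import Mathlib

open MeasureTheory intervalIntegral

open Real Set
open scoped ENNReal



lemma sinDeriv (l a x : ℝ) (hl : l ≠ 0) :
    HasDerivAt (fun t => -Real.cos (l*(t-a))/l) (Real.sin (l*(x-a))) x := by
  have h1 : HasDerivAt (fun t : ℝ => l*(t-a)) l x := by
    simpa using ((hasDerivAt_id x).sub_const a).const_mul l
  have h2 : HasDerivAt (fun t => Real.cos (l*(t-a))) (-Real.sin (l*(x-a)) * l) x := by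
    exact (Real.hasDerivAt_cos (l*(x-a))).comp x h1
  have h3 := h2.const_mul (-1/l)
  have e1 : (fun t => -Real.cos (l*(t-a))/l) = fun t => -1/l * Real.cos (l*(t-a)) := by
    funext t; ring
  have e2 : Real.sin (l*(x-a)) = -1/l * (-Real.sin (l*(x-a)) * l) := by
    rw [show -1/l * (-Real.sin (l*(x-a)) * l) = Real.sin (l*(x-a)) * (l/l) by ring, div_self hl, mul_one]
  rw [e1, e2]; exact h3
lemma cosDeriv (l a x : ℝ) (hl : l ≠ 0) :
    HasDerivAt (fun t => Real.sin (l*(t-a))/l) (Real.cos (l*(x-a))) x := by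
  have h1 : HasDerivAt (fun t : ℝ => l*(t-a)) l x := by
    simpa using ((hasDerivAt_id x).sub_const a).const_mul l
  have h2 : HasDerivAt (fun t => Real.sin (l*(t-a))) (Real.cos (l*(x-a)) * l) x := by
    exact (Real.hasDerivAt_sin (l*(x-a))).comp x h1
  have h3 := h2.const_mul (1/l)
  have e1 : (fun t => Real.sin (l*(t-a))/l) = fun t => 1/l * Real.sin (l*(t-a)) := by
    funext t; ring
  have e2 : Real.cos (l*(x-a)) = 1/l * (Real.cos (l*(x-a)) * l) := by
    rw [show 1/l * (Real.cos (l*(x-a)) * l) = Real.cos (l*(x-a)) * (l/l) by ring, div_self hl, mul_one]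
  rw [e1, e2]; exact h3
lemma sinInt (l a c d : ℝ) (hl : l ≠ 0) :
    ∫ x in c..d, Real.sin (l*(x-a)) =
      (Real.cos (l*(c-a)) - Real.cos (l*(d-a)))/l := by
  rw [intervalIntegral.integral_eq_sub_of_hasDerivAt
    (fun x _ => sinDeriv l a x hl)]
  · ring
  · apply Continuous.intervalIntegrable; continuity
lemma cosInt (l a c d : ℝ) (hl : l ≠ 0) :
    ∫ x in c..d, Real.cos (l*(x-a)) =
      (Real.sin (l*(d-a)) - Real.sin (l*(c-a)))/l := by
  rw [intervalIntegral.integral_eq_sub_of_hasDerivAt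
    (fun x _ => cosDeriv l a x hl)]
  · ring
  · apply Continuous.intervalIntegrable; continuity



lemma lintegral_sq_le {α : Type*} [MeasurableSpace α] (μ : Measure α) (f g : α → ℝ≥0∞)
    (hf : AEMeasurable f μ) (hg : AEMeasurable g μ) :
    (∫⁻ x, f x * g x ∂μ)^2 ≤ (∫⁻ x, (f x)^2 ∂μ) * (∫⁻ x, (g x)^2 ∂μ) := by
  have hconj : Real.HolderConjugate 2 2 := Real.HolderConjugate.two_two
  have h := ENNReal.lintegral_mul_le_Lp_mul_Lq μ hconj hf hg
  have h2 := pow_le_pow_left' h 2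
  calc (∫⁻ x, f x * g x ∂μ)^2 ≤ ((∫⁻ x, f x ^ (2:ℝ) ∂μ) ^ (1/(2:ℝ)) * (∫⁻ x, g x ^ (2:ℝ) ∂μ) ^ (1/(2:ℝ)))^2 := h2
    _ = (∫⁻ x, (f x)^2 ∂μ) * (∫⁻ x, (g x)^2 ∂μ) := by
        rw [mul_pow, ← ENNReal.rpow_natCast (_ ^ (1/(2:ℝ))), ← ENNReal.rpow_natCast (_ ^ (1/(2:ℝ))),
          ← ENNReal.rpow_mul, ← ENNReal.rpow_mul]
        norm_num


/-- Sharp Poincaré–Wirtinger inequality on an interval, with optimal constant `(b-a)/π`,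
stated in squared (L²) form. -/
theorem stmt3 (a b : ℝ) (hab : a < b) (u u' : ℝ → ℝ)
    (hderiv : ∀ x ∈ Set.Icc a b, HasDerivAt u (u' x) x)
    (hu' : IntervalIntegrable u' volume a b)
    (hu'2 : IntervalIntegrable (fun x => (u' x) ^ 2) volume a b) :
    (∫ x in a..b, (u x - (b - a)⁻¹ * ∫ y in a..b, u y) ^ 2) ≤
      ((b - a) / Real.pi) ^ 2 * ∫ x in a..b, (u' x) ^ 2 := by
  classical
  set L := b - a with hLdef
  have hL : 0 < L := sub_pos.2 hab
  set l := Real.pi / L with hldef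
  have hl : 0 < l := div_pos Real.pi_pos hL
  have hlL : l * L = Real.pi := div_mul_cancel₀ _ hL.ne'
  set ub := (b-a)⁻¹ * ∫ y in a..b, u y with hubdef
  set v : ℝ → ℝ := fun x => u x - ub with hvdef
  set I : Set ℝ := Set.Ioc a b with hIdef
  set μ : Measure ℝ := volume.restrict I with hmu
  have hIm : MeasurableSet I := measurableSet_Ioc
  have hvolI : μ Set.univ = ENNReal.ofReal L := by
    rw [hmu, Measure.restrict_apply_univ, Real.volume_Ioc]
  have hucont : ContinuousOn u (Set.Icc a b) := fun x hx =>
    ((hderiv x hx).continuousAt).continuousWithinAt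
  have hvcont : ContinuousOn v (Set.Icc a b) := hucont.sub continuousOn_const
  set v0 : ℝ → ℝ := (Set.Icc a b).piecewise v (fun _ => 0) with hv0def
  have hv0m : Measurable v0 :=
    hvcont.measurable_piecewise continuousOn_const measurableSet_Icc
  have hv0eq : ∀ x ∈ Set.Icc a b, v0 x = v x := fun x hx => Set.piecewise_eq_of_mem _ _ _ hx
  have hsub : I ⊆ Set.Icc a b := Set.Ioc_subset_Icc_self
  -- mean zero
  have meanv : ∫ x in I, v0 x = 0 := by
    have h1 : ∫ x in I, v0 x = ∫ x in I, v x :=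
      setIntegral_congr_fun hIm (fun x hx => hv0eq x (hsub hx))
    rw [h1]
    have h2 : ∫ x in I, v x = ∫ x in a..b, v x := (intervalIntegral.integral_of_le hab.le).symm
    rw [h2, hvdef]
    have hui : IntervalIntegrable u volume a b :=
      (hucont.intervalIntegrable_of_Icc hab.le)
    rw [intervalIntegral.integral_sub hui intervalIntegrable_const,
      intervalIntegral.integral_const, hubdef]
    field_simp
    rw [smul_eq_mul, mul_div_cancel₀ _ (sub_pos.2 hab).ne', sub_self]
  -- integrability of v0 and v0^2 on I
  have hv0int : IntegrableOn v0 I := by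
    refine (IntegrableOn.congr_fun ?_ (fun x hx => (hv0eq x (hsub hx)).symm) hIm)
    exact (hvcont.integrableOn_Icc).mono_set hsub
  have hv0sqint : IntegrableOn (fun x => (v0 x)^2) I := by
    refine (IntegrableOn.congr_fun ?_ (fun x hx => by rw [hv0eq x (hsub hx)]) hIm)
    exact ((hvcont.pow 2).integrableOn_Icc).mono_set hsub
  set E := ∫ x in I, (v0 x)^2 with hEdef
  have hEnn : 0 ≤ E := setIntegral_nonneg hIm (fun x _ => sq_nonneg _)
  -- Step A inner
  have innerA : ∀ y : ℝ, ∫ x in I, (v0 x - v0 y)^2 = E + L * (v0 y)^2 := by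
    intro y
    have expand : ∀ x, (v0 x - v0 y)^2 = (v0 x)^2 - (2 * v0 y) * v0 x + (v0 y)^2 := by
      intro x; ring
    simp_rw [expand]
    have hconst : IntegrableOn (fun _ : ℝ => (v0 y)^2) I := by
      apply integrableOn_const ?_
      rw [Real.volume_Ioc]; exact ENNReal.ofReal_ne_top
    have hsubint : IntegrableOn (fun x => (v0 x)^2 - 2 * v0 y * v0 x) I := by
      have := hv0sqint.sub (hv0int.const_mul (2 * v0 y))
      exact this
    rw [integral_add hsubint hconst, integral_sub hv0sqint (hv0int.const_mul (2 * v0 y)),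
      MeasureTheory.integral_const_mul, meanv, MeasureTheory.integral_const]
    simp only [smul_eq_mul, mul_zero, sub_zero]
    rw [measureReal_def, Measure.restrict_apply_univ, Real.volume_Ioc, ENNReal.toReal_ofReal hL.le]
  -- Step A: double lintegral of (v0 x - v0 y)^2 equals 2 L E
  set F : ℝ → ℝ → ℝ≥0∞ := fun y x => ENNReal.ofReal ((v0 x - v0 y)^2) with hFdef
  have hFsq : ∀ y, IntegrableOn (fun x => (v0 x - v0 y)^2) I := by
    intro y
    have h1 : IntegrableOn (fun x => (v0 x)^2 - 2 * v0 y * v0 x + (v0 y)^2) I := by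
      apply (hv0sqint.sub (hv0int.const_mul (2 * v0 y))).add
      apply integrableOn_const ?_
      rw [Real.volume_Ioc]; exact ENNReal.ofReal_ne_top
    exact h1.congr_fun (fun x _ => by ring) hIm
  have claimA : (∫⁻ y, (∫⁻ x, F y x ∂μ) ∂μ) = ENNReal.ofReal (2*L*E) := by
    have inner : ∀ y : ℝ, (∫⁻ x, F y x ∂μ) = ENNReal.ofReal (E + L * (v0 y)^2) := by
      intro y
      rw [hmu, ← ofReal_integral_eq_lintegral_ofReal (hFsq y)
        (Filter.Eventually.of_forall (fun x => sq_nonneg _)), innerA y]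
    simp_rw [inner]
    have hintE : IntegrableOn (fun y => E + L * (v0 y)^2) I := by
      apply Integrable.add
      · apply integrableOn_const ?_
        rw [Real.volume_Ioc]; exact ENNReal.ofReal_ne_top
      · exact hv0sqint.const_mul L
    rw [hmu, ← ofReal_integral_eq_lintegral_ofReal hintE
      (Filter.Eventually.of_forall (fun y => by positivity))]
    congr 1
    rw [MeasureTheory.integral_add ((show IntegrableOn (fun _ : ℝ => E) I volume from integrableOn_const (by rw [Real.volume_Ioc]; exact ENNReal.ofReal_ne_top))) (show IntegrableOn (fun x => L * v0 x ^ 2) I volume from hv0sqint.const_mul L),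
      MeasureTheory.integral_const, MeasureTheory.integral_const_mul,
      measureReal_def, Measure.restrict_apply_univ, Real.volume_Ioc, ENNReal.toReal_ofReal hL.le]
    rw [← hEdef, smul_eq_mul]
    ring
  -- measurable version of u'
  have hu'int : IntegrableOn u' I := hu'.1
  have hu'aem : AEMeasurable u' μ := hu'int.aemeasurable
  set g : ℝ → ℝ := hu'aem.mk u' with hgdef
  have hgm : Measurable g := hu'aem.measurable_mk
  have hgae : u' =ᵐ[μ] g := hu'aem.ae_eq_mk
  set W : ℝ → ℝ≥0∞ := fun t => ENNReal.ofReal (Real.sin (l*(t-a))) with hWdef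
  have hWm : Measurable W :=
    ENNReal.measurable_ofReal.comp (Real.continuous_sin.comp (continuous_const.mul (continuous_id.sub continuous_const))).measurable
  set Hg : ℝ → ℝ≥0∞ := fun t => ENNReal.ofReal ((g t)^2) / W t with hHdef
  have hHm : Measurable Hg :=
    (ENNReal.measurable_ofReal.comp ((hgm.pow_const 2))).div hWm
  set A : ℝ → ℝ → ℝ≥0∞ :=
    fun y x => ENNReal.ofReal ((Real.cos (l*(y-a)) - Real.cos (l*(x-a)))/l) with hAdef
  -- values of sin and cos
  have hsin_nn : ∀ t ∈ Set.Icc a b, 0 ≤ Real.sin (l*(t-a)) := by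
    intro t ht
    apply Real.sin_nonneg_of_nonneg_of_le_pi
    · exact mul_nonneg hl.le (by linarith [ht.1])
    · rw [← hlL]
      apply mul_le_mul_of_nonneg_left _ hl.le
      rw [hLdef]; linarith [ht.2]
  have hsin_pos : ∀ t, a < t → t < b → 0 < Real.sin (l*(t-a)) := by
    intro t h1 h2
    apply Real.sin_pos_of_pos_of_lt_pi
    · have : 0 < t - a := by linarith
      positivity
    · rw [← hlL]
      apply (mul_lt_mul_iff_right₀ hl).2
      rw [hLdef]; linarith
  have hWA : ∀ y x, a ≤ y → y ≤ x → x ≤ b → (∫⁻ t in Set.Ioc y x, W t) = A y x := by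
    intro y x hay hyx hxb
    have hint : IntegrableOn (fun t => Real.sin (l*(t-a))) (Set.Ioc y x) :=
      (Real.continuous_sin.comp (continuous_const.mul (continuous_id.sub continuous_const))).integrableOn_Ioc
    rw [hWdef, ← ofReal_integral_eq_lintegral_ofReal hint ?_]
    · rw [← intervalIntegral.integral_of_le hyx, sinInt l a y x hl.ne', hAdef]
    · apply (ae_restrict_iff' measurableSet_Ioc).2
      apply Filter.Eventually.of_forall
      intro t ht
      exact hsin_nn t ⟨le_trans hay ht.1.le, le_trans ht.2 hxb⟩
  -- FTC
  have key : ∀ y ∈ Set.Icc a b, ∀ x ∈ Set.Icc a b, y ≤ x →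
      v0 x - v0 y = ∫ t in y..x, u' t := by
    intro y hy x hx hyx
    rw [hv0eq y hy, hv0eq x hx, hvdef]
    have hss : Set.uIcc y x ⊆ Set.Icc a b := by
      rw [Set.uIcc_of_le hyx]
      exact Set.Icc_subset_Icc hy.1 hx.2
    rw [intervalIntegral.integral_eq_sub_of_hasDerivAt (fun t ht => hderiv t (hss ht))
      (hu'.mono_set (by rw [Set.uIcc_of_le hab.le]; exact hss))]
    ring
  -- Step B: pointwise Cauchy-Schwarz bound
  have stepB : ∀ y ∈ I, ∀ x ∈ I, y < x →
      F y x ≤ A y x * ∫⁻ t in Set.Ioc y x, Hg t := by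
    intro y hy x hx hyx
    have hay : a < y := hy.1
    have hyx' : y ≤ x := hyx.le
    have hIoc : Set.Ioc y x ⊆ I := Set.Ioc_subset_Ioc hay.le hx.2
    have habs : |v0 x - v0 y| ≤ ∫ t in y..x, |u' t| := by
      rw [key y (hsub hy) x (hsub hx) hyx']
      exact intervalIntegral.abs_integral_le_integral_abs hyx'
    set R := ∫ t in y..x, |u' t| with hR
    have hRnn : 0 ≤ R := intervalIntegral.integral_nonneg hyx' (fun t _ => abs_nonneg _)
    have h2 : (v0 x - v0 y)^2 ≤ R^2 := by
      rw [← sq_abs]; exact pow_le_pow_left₀ (abs_nonneg _) habs 2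
    have habsint : IntegrableOn (fun t => |u' t|) (Set.Ioc y x) := (hu'int.mono_set hIoc).abs
    have hRof : ENNReal.ofReal R = ∫⁻ t in Set.Ioc y x, ENNReal.ofReal |u' t| := by
      rw [hR, intervalIntegral.integral_of_le hyx',
        ofReal_integral_eq_lintegral_ofReal habsint
          (Filter.Eventually.of_forall fun t => abs_nonneg _)]
    have hae1 : (fun t => ENNReal.ofReal |u' t|)
        =ᵐ[volume.restrict (Set.Ioc y x)] (fun t => ENNReal.ofReal |g t|) := by
      have h := hgae.filter_mono (ae_mono (Measure.restrict_mono hIoc le_rfl))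
      exact h.fun_comp (fun r => ENNReal.ofReal |r|)
    set ff : ℝ → ℝ≥0∞ := fun t => (W t)^(1/2:ℝ) with hffdef
    set gg : ℝ → ℝ≥0∞ := fun t => (Hg t)^(1/2:ℝ) with hggdef
    have hae2 : (fun t => ENNReal.ofReal |g t|)
        =ᵐ[volume.restrict (Set.Ioc y x)] fun t => ff t * gg t := by
      have hb : (volume.restrict (Set.Ioc y x)) {b} ≤ volume {b} :=
        Measure.restrict_le_self _
      rw [Real.volume_singleton] at hb
      have hne : ∀ᵐ t ∂(volume.restrict (Set.Ioc y x)), t ≠ b := by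
        rw [ae_iff]
        have hset : {t : ℝ | ¬ t ≠ b} = {b} := by ext t; simp
        rw [hset]
        exact le_antisymm hb zero_le
      filter_upwards [hne, ae_restrict_mem measurableSet_Ioc] with t htb ht
      have hta : a < t := lt_trans hay ht.1
      have htb' : t < b := lt_of_le_of_ne (le_trans ht.2 hx.2) htb
      have hW0 : W t ≠ 0 := (ENNReal.ofReal_pos.2 (hsin_pos t hta htb')).ne'
      have hWt : W t ≠ ⊤ := ENNReal.ofReal_ne_top
      have hmul : ff t * gg t = (W t * Hg t)^(1/2:ℝ) :=
        (ENNReal.mul_rpow_of_nonneg _ _ (by norm_num)).symm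
      rw [hmul, hHdef]
      simp only []
      rw [ENNReal.mul_div_cancel hW0 hWt]
      rw [show (g t)^2 = |g t|^2 from (sq_abs _).symm, ENNReal.ofReal_pow (abs_nonneg _),
        ← ENNReal.rpow_natCast, ← ENNReal.rpow_mul]
      norm_num
    have hffm : AEMeasurable ff (volume.restrict (Set.Ioc y x)) :=
      (hWm.pow_const _).aemeasurable
    have hggm : AEMeasurable gg (volume.restrict (Set.Ioc y x)) :=
      (hHm.pow_const _).aemeasurable
    have hcs := lintegral_sq_le (volume.restrict (Set.Ioc y x)) ff gg hffm hggm
    have hffsq : ∀ t, (ff t)^2 = W t := fun t => by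
      rw [hffdef]; rw [← ENNReal.rpow_natCast, ← ENNReal.rpow_mul]; norm_num
    have hggsq : ∀ t, (gg t)^2 = Hg t := fun t => by
      rw [hggdef]; rw [← ENNReal.rpow_natCast, ← ENNReal.rpow_mul]; norm_num
    calc F y x = ENNReal.ofReal ((v0 x - v0 y)^2) := rfl
      _ ≤ ENNReal.ofReal (R^2) := ENNReal.ofReal_le_ofReal h2
      _ = (ENNReal.ofReal R)^2 := by rw [← ENNReal.ofReal_pow hRnn]
      _ = (∫⁻ t in Set.Ioc y x, ENNReal.ofReal |u' t|)^2 := by rw [hRof]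
      _ = (∫⁻ t in Set.Ioc y x, ff t * gg t)^2 := by
          rw [lintegral_congr_ae (hae1.trans hae2)]
      _ ≤ (∫⁻ t in Set.Ioc y x, (ff t)^2) * (∫⁻ t in Set.Ioc y x, (gg t)^2) := hcs
      _ = A y x * ∫⁻ t in Set.Ioc y x, Hg t := by
          simp_rw [hffsq, hggsq]
          rw [hWA y x hay.le hyx' hx.2]
  -- swap lemma
  have hswap : ∀ f : ℝ → ℝ → ℝ≥0∞, Measurable (Function.uncurry f) →
      (∫⁻ y, ∫⁻ x, f y x ∂μ ∂μ) = ∫⁻ y, ∫⁻ x, f x y ∂μ ∂μ := by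
    intro f hf
    exact lintegral_lintegral_swap hf.aemeasurable
  have hFym : ∀ y, Measurable (F y) := fun y =>
    ENNReal.measurable_ofReal.comp ((hv0m.sub measurable_const).pow_const 2)
  have hFuncur : Measurable (Function.uncurry F) := by
    apply ENNReal.measurable_ofReal.comp
    exact ((hv0m.comp measurable_snd).sub (hv0m.comp measurable_fst)).pow_const 2
  set Ψ₂ := ∫⁻ y, ∫⁻ x, (Set.Ioi y).indicator (F y) x ∂μ ∂μ with hΨ₂def
  have hind2m : Measurable (Function.uncurry fun y x => (Set.Iio y).indicator (F y) x) := by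
    have heq : (Function.uncurry fun y x => (Set.Iio y).indicator (F y) x)
        = Set.indicator {p : ℝ × ℝ | p.2 < p.1} (Function.uncurry F) := by
      funext p
      simp [Function.uncurry, Set.indicator_apply, Set.mem_Iio]
    rw [heq]
    exact hFuncur.indicator (measurableSet_lt measurable_snd measurable_fst)
  have hind1m : Measurable (Function.uncurry fun y x => (Set.Ioi y).indicator (F y) x) := by
    have heq : (Function.uncurry fun y x => (Set.Ioi y).indicator (F y) x)
        = Set.indicator {p : ℝ × ℝ | p.1 < p.2} (Function.uncurry F) := by
      funext p
      simp [Function.uncurry, Set.indicator_apply, Set.mem_Ioi]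
    rw [heq]
    exact hFuncur.indicator (measurableSet_lt measurable_fst measurable_snd)
  have splitΨ : (∫⁻ y, ∫⁻ x, F y x ∂μ ∂μ) = 2 * Ψ₂ := by
    have hpt : ∀ y x : ℝ, F y x
        = (Set.Iio y).indicator (F y) x + (Set.Ioi y).indicator (F y) x := by
      intro y x
      rcases lt_trichotomy x y with h|h|h
      · simp [Set.indicator_apply, Set.mem_Iio, Set.mem_Ioi, h, lt_asymm h]
      · subst h
        simp [Set.indicator_apply, hFdef]
      · simp [Set.indicator_apply, Set.mem_Iio, Set.mem_Ioi, h, lt_asymm h]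
    have hstep1 : (∫⁻ y, ∫⁻ x, F y x ∂μ ∂μ)
        = (∫⁻ y, ∫⁻ x, (Set.Iio y).indicator (F y) x ∂μ ∂μ) + Ψ₂ := by
      rw [hΨ₂def, ← lintegral_add_left (hind2m.lintegral_prod_right)]
      apply lintegral_congr
      intro y
      rw [← lintegral_add_left ((hFym y).indicator measurableSet_Iio)]
      exact lintegral_congr fun x => hpt y x
    have hsym : (∫⁻ y, ∫⁻ x, (Set.Iio y).indicator (F y) x ∂μ ∂μ) = Ψ₂ := by
      rw [hswap _ hind2m, hΨ₂def]
      have hsymF : ∀ p q : ℝ, F p q = F q p := fun p q => by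
        simp only [hFdef]
        rw [show (v0 q - v0 p)^2 = (v0 p - v0 q)^2 by ring]
      apply lintegral_congr; intro y
      apply lintegral_congr; intro x
      by_cases h : y < x
      · simp [Set.indicator_apply, h, hsymF x y]
      · simp [Set.indicator_apply, h]
    rw [hstep1, hsym, two_mul]
  -- Φ₂ and monotonicity
  set B : ℝ → ℝ → ℝ≥0∞ := fun y x => ∫⁻ t in Set.Ioc y x, Hg t with hBdef
  set Φ₂ := ∫⁻ y, ∫⁻ x, (Set.Ioi y).indicator (fun x => A y x * B y x) x ∂μ ∂μ with hΦ₂def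
  have mono : Ψ₂ ≤ Φ₂ := by
    rw [hΨ₂def, hΦ₂def]
    apply lintegral_mono_ae
    filter_upwards [ae_restrict_mem hIm] with y hy
    apply lintegral_mono_ae
    filter_upwards [ae_restrict_mem hIm] with x hx
    by_cases h : y < x
    · simpa [Set.indicator_apply, h] using stepB y hy x hx h
    · simp [Set.indicator_apply, h]
  -- cosine monotonicity helper
  have hcos : ∀ y x : ℝ, a ≤ y → y ≤ x → x ≤ b →
      Real.cos (l*(x-a)) ≤ Real.cos (l*(y-a)) := by
    intro y x hay hyx hxb
    apply Real.cos_le_cos_of_nonneg_of_le_pi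
    · exact mul_nonneg hl.le (by linarith)
    · rw [← hlL]
      apply mul_le_mul_of_nonneg_left _ hl.le
      rw [hLdef]; linarith
    · apply mul_le_mul_of_nonneg_left _ hl.le
      linarith
  -- explicit kernel q
  set q : ℝ → ℝ → ℝ :=
    fun y t => ((b - t) * Real.cos (l*(y-a)) + Real.sin (l*(t-a))/l)/l with hqdef
  have hcontcos : Continuous (fun x : ℝ => Real.cos (l*(x-a))) :=
    Real.continuous_cos.comp (continuous_const.mul (continuous_id.sub continuous_const))
  have hqeq : ∀ y t : ℝ,
      q y t = ∫ x in t..b, (Real.cos (l*(y-a)) - Real.cos (l*(x-a)))/l := by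
    intro y t
    rw [intervalIntegral.integral_div,
      intervalIntegral.integral_sub intervalIntegrable_const
        (hcontcos.intervalIntegrable _ _),
      intervalIntegral.integral_const, cosInt l a t b hl.ne']
    have hsb : Real.sin (l*(b-a)) = 0 := by
      rw [show l*(b-a) = Real.pi from by rw [← hlL, hLdef]]
      exact Real.sin_pi
    rw [hsb, hqdef]
    simp only [smul_eq_mul]
    ring
  have hqnn : ∀ y t : ℝ, a ≤ y → y ≤ t → t ≤ b → 0 ≤ q y t := by
    intro y t hay hyt htb
    rw [hqeq y t]
    apply intervalIntegral.integral_nonneg htb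
    intro x hx
    have := hcos y x hay (le_trans hyt hx.1) hx.2
    exact div_nonneg (by linarith) hl.le
  -- inner x-integral value
  have hQ : ∀ y t : ℝ, a < y → y < t → t ≤ b →
      (∫⁻ x, (Set.Ici t).indicator (A y) x ∂μ) = ENNReal.ofReal (q y t) := by
    intro y t hay hyt htb
    rw [hmu, lintegral_indicator measurableSet_Ici,
      Measure.restrict_restrict measurableSet_Ici]
    have hset : Set.Ici t ∩ I = Set.Icc t b := by
      ext z
      simp only [hIdef, Set.mem_inter_iff, Set.mem_Ici, Set.mem_Ioc, Set.mem_Icc]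
      constructor
      · rintro ⟨h1, _, h3⟩; exact ⟨h1, h3⟩
      · rintro ⟨h1, h2⟩; exact ⟨h1, lt_of_lt_of_le (lt_trans hay hyt) h1, h2⟩
    rw [hset]
    have hint : IntegrableOn (fun x => (Real.cos (l*(y-a)) - Real.cos (l*(x-a)))/l)
        (Set.Icc t b) :=
      (((continuous_const.sub hcontcos).div_const l).integrableOn_Icc)
    rw [hAdef, ← ofReal_integral_eq_lintegral_ofReal hint ?_]
    · congr 1
      rw [integral_Icc_eq_integral_Ioc, ← intervalIntegral.integral_of_le htb, ← hqeq y t]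
    · apply (ae_restrict_iff' measurableSet_Icc).2
      apply Filter.Eventually.of_forall
      intro x hx
      have := hcos y x hay.le (le_trans hyt.le hx.1) hx.2
      exact div_nonneg (by linarith) hl.le
  -- inner y-integral value
  have hG : ∀ t : ℝ, a < t → t ≤ b →
      (∫⁻ y, (Set.Iio t).indicator (fun y => ENNReal.ofReal (q y t)) y ∂μ)
        = ENNReal.ofReal (L * Real.sin (l*(t-a)) / l^2) := by
    intro t hat htb
    rw [hmu, lintegral_indicator measurableSet_Iio,
      Measure.restrict_restrict measurableSet_Iio]
    have hset : Set.Iio t ∩ I = Set.Ioo a t := by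
      ext z
      simp only [hIdef, Set.mem_inter_iff, Set.mem_Iio, Set.mem_Ioc, Set.mem_Ioo]
      constructor
      · rintro ⟨h1, h2, _⟩; exact ⟨h2, h1⟩
      · rintro ⟨h1, h2⟩; exact ⟨h2, h1, le_trans h2.le htb⟩
    rw [hset]
    have hint : IntegrableOn (fun y => q y t) (Set.Ioo a t) := by
      have hc : Continuous (fun y => q y t) := by
        rw [hqdef]
        exact ((continuous_const.mul hcontcos).add continuous_const).div_const l
      exact (hc.integrableOn_Icc).mono_set Set.Ioo_subset_Icc_self
    rw [← ofReal_integral_eq_lintegral_ofReal hint ?_]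
    · congr 1
      rw [← integral_Ioc_eq_integral_Ioo, ← intervalIntegral.integral_of_le hat.le]
      simp only [hqdef]
      rw [intervalIntegral.integral_div,
        intervalIntegral.integral_add ((show Continuous fun x => (b - t) * Real.cos (l*(x-a)) from continuous_const.mul hcontcos).intervalIntegrable _ _)
          intervalIntegrable_const,
        intervalIntegral.integral_const_mul, cosInt l a a t hl.ne',
        intervalIntegral.integral_const]
      have h0 : Real.sin (l*(a-a)) = 0 := by simp
      rw [h0]
      simp only [smul_eq_mul]
      rw [hLdef]
      field_simp
      ring
    · apply (ae_restrict_iff' measurableSet_Ioo).2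
      apply Filter.Eventually.of_forall
      intro z hz
      exact hqnn z t hz.1.le hz.2.le htb
  -- measurability helpers
  have hAym : ∀ y, Measurable (A y) := fun y =>
    ENNReal.measurable_ofReal.comp ((continuous_const.sub hcontcos).div_const l).measurable
  have hqc1 : ∀ t, Continuous (fun y => q y t) := by
    intro t
    rw [hqdef]
    exact ((continuous_const.mul hcontcos).add continuous_const).div_const l
  have hqcont : Continuous (fun p : ℝ × ℝ => q p.1 p.2) := by
    rw [hqdef]
    exact (((continuous_const.sub continuous_snd).mul (hcontcos.comp continuous_fst)).add
      ((Real.continuous_sin.comp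
        (continuous_const.mul (continuous_snd.sub continuous_const))).div_const l)).div_const l
  set k : ℝ → ℝ → ℝ → ℝ≥0∞ := fun y x t =>
    (Set.Ioi y).indicator (fun t' => (Set.Ici t').indicator (A y) x * Hg t') t with hkdef
  have hk_m : ∀ y, Measurable (Function.uncurry fun x t => k y x t) := by
    intro y
    have heq : (Function.uncurry fun x t => k y x t)
        = Set.indicator {p : ℝ × ℝ | y < p.2 ∧ p.2 ≤ p.1}
            (fun p => A y p.1 * Hg p.2) := by
      funext p
      rcases p with ⟨x, t⟩
      by_cases h1 : y < t <;> by_cases h2 : t ≤ x <;>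
        simp [hkdef, Function.uncurry, Set.indicator_apply, Set.mem_Ioi, Set.mem_Ici, h1, h2]
    rw [heq]
    exact (((hAym y).comp measurable_fst).mul (hHm.comp measurable_snd)).indicator
      ((measurableSet_lt measurable_const measurable_snd).inter
        (measurableSet_le measurable_snd measurable_fst))
  -- step 1 : insert t integral
  have step1 : Φ₂ = ∫⁻ y, ∫⁻ x, ∫⁻ t, k y x t ∂μ ∂μ ∂μ := by
    rw [hΦ₂def]
    apply lintegral_congr_ae
    filter_upwards [ae_restrict_mem hIm] with y hy
    apply lintegral_congr_ae
    filter_upwards [ae_restrict_mem hIm] with x hx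
    by_cases h : y < x
    · have hpt : ∀ t : ℝ, k y x t = (Set.Ioc y x).indicator (fun t => A y x * Hg t) t := by
        intro t
        by_cases h1 : y < t <;> by_cases h2 : t ≤ x <;>
          simp [hkdef, Set.indicator_apply, Set.mem_Ioi, Set.mem_Ici, Set.mem_Ioc, h1, h2]
      rw [lintegral_congr hpt, hmu, lintegral_indicator measurableSet_Ioc,
        Measure.restrict_restrict measurableSet_Ioc,
        Set.inter_eq_self_of_subset_left (Set.Ioc_subset_Ioc hy.1.le hx.2),
        lintegral_const_mul _ hHm, Set.indicator_of_mem (Set.mem_Ioi.2 h), hBdef]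
    · have hpt : ∀ t : ℝ, k y x t = 0 := by
        intro t
        by_cases h1 : y < t
        · have h2 : ¬ t ≤ x := fun hc => h (lt_of_lt_of_le h1 hc)
          simp [hkdef, Set.indicator_apply, Set.mem_Ioi, Set.mem_Ici, h1, h2]
        · simp [hkdef, Set.indicator_apply, Set.mem_Ioi, h1]
      rw [lintegral_congr hpt, lintegral_zero, Set.indicator_of_notMem (by simpa using h)]
  -- step 2 : swap x and t
  have step2 : Φ₂ = ∫⁻ y, ∫⁻ t, ∫⁻ x, k y x t ∂μ ∂μ ∂μ := by
    rw [step1]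
    exact lintegral_congr fun y => hswap (fun x t => k y x t) (hk_m y)
  -- step 3 : evaluate the x integral
  have step3 : Φ₂ = ∫⁻ y, ∫⁻ t,
      (Set.Ioi y).indicator (fun t => Hg t * ENNReal.ofReal (q y t)) t ∂μ ∂μ := by
    rw [step2]
    apply lintegral_congr_ae
    filter_upwards [ae_restrict_mem hIm] with y hy
    apply lintegral_congr_ae
    filter_upwards [ae_restrict_mem hIm] with t ht
    by_cases h1 : y < t
    · have hpt : ∀ x : ℝ, k y x t = (Set.Ici t).indicator (A y) x * Hg t := by
        intro x
        simp [hkdef, Set.indicator_apply, Set.mem_Ioi, h1]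
      rw [lintegral_congr hpt, lintegral_mul_const _ ((hAym y).indicator measurableSet_Ici),
        hQ y t hy.1 h1 ht.2, Set.indicator_of_mem (Set.mem_Ioi.2 h1), mul_comm]
    · have hpt : ∀ x : ℝ, k y x t = 0 := by
        intro x
        simp [hkdef, Set.indicator_apply, Set.mem_Ioi, h1]
      rw [lintegral_congr hpt, lintegral_zero, Set.indicator_of_notMem (by simpa using h1)]
  -- step 4 : swap y and t
  have step4 : Φ₂ = ∫⁻ t, ∫⁻ y,
      (Set.Ioi y).indicator (fun t => Hg t * ENNReal.ofReal (q y t)) t ∂μ ∂μ := by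
    rw [step3]
    apply hswap
    have heq : (Function.uncurry fun y t =>
        (Set.Ioi y).indicator (fun t => Hg t * ENNReal.ofReal (q y t)) t)
        = Set.indicator {p : ℝ × ℝ | p.1 < p.2}
            (fun p => Hg p.2 * ENNReal.ofReal (q p.1 p.2)) := by
      funext p
      rcases p with ⟨y, t⟩
      by_cases h1 : y < t <;>
        simp [Function.uncurry, Set.indicator_apply, Set.mem_Ioi, h1]
    rw [heq]
    exact ((hHm.comp measurable_snd).mul
      (ENNReal.measurable_ofReal.comp hqcont.measurable)).indicator
      (measurableSet_lt measurable_fst measurable_snd)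
  -- step 5 : evaluate the y integral
  have step5 : Φ₂ = ∫⁻ t, Hg t * ENNReal.ofReal (L * Real.sin (l*(t-a)) / l^2) ∂μ := by
    rw [step4]
    apply lintegral_congr_ae
    filter_upwards [ae_restrict_mem hIm] with t ht
    have hpt : ∀ y : ℝ, (Set.Ioi y).indicator (fun t => Hg t * ENNReal.ofReal (q y t)) t
        = Hg t * (Set.Iio t).indicator (fun y => ENNReal.ofReal (q y t)) y := by
      intro y
      by_cases h1 : y < t <;>
        simp [Set.indicator_apply, Set.mem_Ioi, Set.mem_Iio, h1]
    rw [lintegral_congr hpt, lintegral_const_mul _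
      (((hqc1 t).measurable.ennreal_ofReal).indicator measurableSet_Iio),
      hG t ht.1 ht.2]
  -- step 6 : final value of Φ₂
  set J := ∫ t in I, (u' t)^2 with hJdef
  have hJnn : 0 ≤ J := setIntegral_nonneg hIm (fun t _ => sq_nonneg _)
  have step6 : Φ₂ = ENNReal.ofReal (L/l^2) * ENNReal.ofReal J := by
    rw [step5]
    have hb : μ {b} ≤ volume {b} := by rw [hmu]; exact Measure.restrict_le_self _
    rw [Real.volume_singleton] at hb
    have hne : ∀ᵐ t ∂μ, t ≠ b := by
      rw [ae_iff]
      have hset : {t : ℝ | ¬ t ≠ b} = {b} := by ext t; simp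
      rw [hset]
      exact le_antisymm hb zero_le
    have hcongr : (fun t => Hg t * ENNReal.ofReal (L * Real.sin (l*(t-a)) / l^2))
        =ᵐ[μ] (fun t => ENNReal.ofReal (L/l^2) * ENNReal.ofReal ((u' t)^2)) := by
      filter_upwards [ae_restrict_mem hIm, hne, hgae] with t ht htb hgt
      have hta : a < t := ht.1
      have htb' : t < b := lt_of_le_of_ne ht.2 htb
      have hW0 : W t ≠ 0 := (ENNReal.ofReal_pos.2 (hsin_pos t hta htb')).ne'
      have hWt : W t ≠ ⊤ := ENNReal.ofReal_ne_top
      have h1 : L * Real.sin (l*(t-a)) / l^2 = (L/l^2) * Real.sin (l*(t-a)) := by ring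
      rw [h1, ENNReal.ofReal_mul (by positivity)]
      have hwt : ENNReal.ofReal (Real.sin (l*(t-a))) = W t := rfl
      rw [hwt]
      rw [mul_left_comm, hHdef]
      simp only []
      rw [ENNReal.div_mul_cancel hW0 hWt, hgt]
    rw [lintegral_congr_ae hcongr,
      lintegral_const_mul' _ _ ENNReal.ofReal_ne_top, hmu,
      ← ofReal_integral_eq_lintegral_ofReal hu'2.1
        (Filter.Eventually.of_forall (fun t => sq_nonneg _)), ← hJdef]
  -- assemble everything
  have chain : ENNReal.ofReal (2*L*E) ≤ ENNReal.ofReal (2*(L/l^2)*J) := by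
    calc ENNReal.ofReal (2*L*E) = ∫⁻ y, ∫⁻ x, F y x ∂μ ∂μ := claimA.symm
      _ = 2 * Ψ₂ := splitΨ
      _ ≤ 2 * Φ₂ := by exact mul_le_mul_right mono 2
      _ = 2 * (ENNReal.ofReal (L/l^2) * ENNReal.ofReal J) := by rw [step6]
      _ = ENNReal.ofReal (2*(L/l^2)*J) := by
          rw [← ENNReal.ofReal_mul (by positivity), ← ENNReal.ofReal_ofNat 2,
            ← ENNReal.ofReal_mul (by positivity), mul_assoc]
  have hreal : 2*L*E ≤ 2*(L/l^2)*J := by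
    have hnn : 0 ≤ 2*(L/l^2)*J := by positivity
    exact (ENNReal.ofReal_le_ofReal_iff hnn).1 chain
  have hEJ : E ≤ (L/Real.pi)^2 * J := by
    have hl2 : L/l^2 = L * (L/Real.pi)^2 := by
      rw [hldef]
      first
      | (field_simp; ring)
      | field_simp
    rw [hl2] at hreal
    nlinarith [hL]
  -- finish
  rw [intervalIntegral.integral_of_le hab.le, intervalIntegral.integral_of_le hab.le]
  have hLHS : ∫ x in Set.Ioc a b, (u x - ub)^2 = E := by
    rw [hEdef]
    apply setIntegral_congr_fun hIm
    intro x hx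
    show (u x - ub)^2 = v0 x ^ 2
    rw [hv0eq x (hsub hx), hvdef]
  calc ∫ x in Set.Ioc a b, (u x - ub)^2 = E := hLHS
    _ ≤ (L/Real.pi)^2 * J := hEJ
    _ = ((b-a)/Real.pi)^2 * ∫ x in Set.Ioc a b, (u' x)^2 := by rw [hJdef, hLdef]
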